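/- arXiv:1207.1007 — 2 statements merged into one kernel-verified Lean document; each statement's English description precedes it below -/
import Mathlib

section
/- Let W be a [0,1]-valued random variable with P(W = 1) < 1, and set a_q = E[ (1−W)^q ] for real q ≥ 0 (so a_q > 0 and q ↦ a_q is nonincreasing). Then Σ_{n=2}^∞ 1/( n(n−1) a_{n−2} ) < ∞ if and only if ∫_1^∞ dq / ( q² a_q ) < ∞. Consequently, the death process with rates λ_n = (n/2)( (n−1) a_{n−2} + θ ), θ ≥ 0, satisfies Σ_{n≥2} λ_n^{−1} < ∞ if and only if ∫_1^∞ dq/(q² a_q) < ∞. -/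
open MeasureTheory Set ENNReal

/-- `a_q = E[(1-W)^q]` for real `q`, with the convention `0^0 = 1` (as for `Real.rpow`). -/
noncomputable def aMom {Ω : Type*} [MeasurableSpace Ω] (ℙ : Measure Ω) (W : Ω → ℝ)
    (q : ℝ) : ℝ :=
  ∫ ω, (1 - W ω) ^ q ∂ℙ

section aux

lemma blocks_tsum_top (f : ℕ → ℝ≥0∞) (c : ℝ≥0∞) (hc : 0 < c)
    (h : ∀ k : ℕ, ∃ n : ℕ, k ≤ n ∧ c ≤ ∑ i ∈ Finset.Ico n (2 * n + 1), f i) :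
    ∑' n, f n = ⊤ := by
  by_contra htop
  choose g hg1 hg2 using h
  set N : ℕ → ℕ := fun k => Nat.rec (g 0) (fun _ p => g (2 * p + 1)) k with hN
  have hstep : ∀ k, 2 * N k + 1 ≤ N (k + 1) := fun k => hg1 (2 * N k + 1)
  have hblock : ∀ k, c ≤ ∑ i ∈ Finset.Ico (N k) (2 * N k + 1), f i := by
    intro k
    cases k with
    | zero => exact hg2 0
    | succ k => exact hg2 (2 * N k + 1)
  have key : ∀ k, (k + 1) • c ≤ ∑ i ∈ Finset.range (2 * N k + 1), f i := by
    intro k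
    induction k with
    | zero =>
      simpa using (hblock 0).trans (Finset.sum_le_sum_of_subset (by
        intro x hx
        simp only [Finset.mem_Ico, Finset.mem_range] at *
        omega))
    | succ k ih =>
      have hdisj : Disjoint (Finset.range (2 * N k + 1))
          (Finset.Ico (N (k + 1)) (2 * N (k + 1) + 1)) := by
        apply Finset.disjoint_left.mpr
        intro x hx1 hx2
        simp only [Finset.mem_range, Finset.mem_Ico] at hx1 hx2
        have := hstep k
        omega
      have hsub : Finset.range (2 * N k + 1) ∪ Finset.Ico (N (k + 1)) (2 * N (k + 1) + 1)
          ⊆ Finset.range (2 * N (k + 1) + 1) := by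
        intro x hx
        simp only [Finset.mem_union, Finset.mem_range, Finset.mem_Ico] at *
        have := hstep k
        omega
      calc (k + 2) • c = (k + 1) • c + c := by rw [succ_nsmul]
        _ ≤ (∑ i ∈ Finset.range (2 * N k + 1), f i)
            + ∑ i ∈ Finset.Ico (N (k + 1)) (2 * N (k + 1) + 1), f i :=
          add_le_add ih (hblock (k + 1))
        _ = ∑ i ∈ Finset.range (2 * N k + 1) ∪ Finset.Ico (N (k + 1)) (2 * N (k + 1) + 1),
            f i := (Finset.sum_union hdisj).symm
        _ ≤ _ := Finset.sum_le_sum_of_subset hsub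
  have hle : ∀ k : ℕ, (k : ℝ≥0∞) * c ≤ ∑' n, f n := by
    intro k
    calc (k : ℝ≥0∞) * c ≤ ((k + 1 : ℕ) : ℝ≥0∞) * c := by
          gcongr; exact_mod_cast Nat.le_succ k
      _ = (k + 1) • c := by rw [nsmul_eq_mul]
      _ ≤ ∑ i ∈ Finset.range (2 * N k + 1), f i := key k
      _ ≤ ∑' n, f n := ENNReal.sum_le_tsum _
  have hcne : c ≠ ⊤ := by
    intro hceq
    exact htop (top_le_iff.mp (by simpa [hceq] using hle 1))
  obtain ⟨k, hk⟩ := ENNReal.exists_nat_gt (r := (∑' n, f n) / c)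
    (ENNReal.div_lt_top htop hc.ne').ne
  have : (∑' n, f n) < (k : ℝ≥0∞) * c :=
    (ENNReal.div_lt_iff (Or.inl hc.ne') (Or.inl hcne)).mp hk
  exact absurd (hle k) (not_le.mpr this)

lemma setLIntegral_le_of_forall {α : Type*} [MeasurableSpace α] (μ : Measure α) {s : Set α}
    (hs : MeasurableSet s) (f : α → ℝ≥0∞) (c : ℝ≥0∞) (h : ∀ x ∈ s, f x ≤ c) :
    ∫⁻ x in s, f x ∂μ ≤ c * μ s := by
  calc ∫⁻ x in s, f x ∂μ = ∫⁻ x, s.indicator f x ∂μ := (lintegral_indicator hs f).symm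
    _ ≤ ∫⁻ x, s.indicator (fun _ => c) x ∂μ := lintegral_mono fun x => by
        by_cases hx : x ∈ s <;> simp [Set.indicator, hx, h x]
    _ = ∫⁻ _ in s, c ∂μ := lintegral_indicator hs _
    _ = c * μ s := setLIntegral_const s c

lemma le_setLIntegral_of_forall {α : Type*} [MeasurableSpace α] (μ : Measure α) {s : Set α}
    (hs : MeasurableSet s) (f : α → ℝ≥0∞) (c : ℝ≥0∞) (h : ∀ x ∈ s, c ≤ f x) :
    c * μ s ≤ ∫⁻ x in s, f x ∂μ := by
  calc c * μ s = ∫⁻ _ in s, c ∂μ := (setLIntegral_const s c).symm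
    _ = ∫⁻ x, s.indicator (fun _ => c) x ∂μ := (lintegral_indicator hs _).symm
    _ ≤ ∫⁻ x, s.indicator f x ∂μ := lintegral_mono fun x => by
        by_cases hx : x ∈ s <;> simp [Set.indicator, hx, h x]
    _ = ∫⁻ x in s, f x ∂μ := lintegral_indicator hs f

section basic
variable {Ω : Type*} [MeasurableSpace Ω] (ℙ : Measure Ω) [IsProbabilityMeasure ℙ]
    (W : Ω → ℝ)

lemma aMom_int (hWm : Measurable W) (hrange : ∀ ω, W ω ∈ Set.Icc (0:ℝ) 1) (q : ℝ) (hq : 0 ≤ q) :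
    Integrable (fun ω => (1 - W ω) ^ q) ℙ := by
  refine Integrable.mono' (integrable_const 1)
    ((measurable_const.sub hWm).pow measurable_const).aestronglyMeasurable ?_
  refine Filter.Eventually.of_forall fun ω => ?_
  rw [Real.norm_eq_abs, abs_of_nonneg (Real.rpow_nonneg (by linarith [(hrange ω).2]) q)]
  exact Real.rpow_le_one (by linarith [(hrange ω).2]) (by linarith [(hrange ω).1]) hq

lemma aMom_anti (hWm : Measurable W) (hrange : ∀ ω, W ω ∈ Set.Icc (0:ℝ) 1) {q r : ℝ}
    (hq : 0 ≤ q) (hqr : q ≤ r) : aMom ℙ W r ≤ aMom ℙ W q := by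
  refine integral_mono (aMom_int ℙ W hWm hrange r (hq.trans hqr)) (aMom_int ℙ W hWm hrange q hq)
    fun ω => ?_
  exact Real.rpow_le_rpow_of_exponent_ge' (by linarith [(hrange ω).2])
    (by linarith [(hrange ω).1]) hq hqr

lemma aMom_pos (hWm : Measurable W) (hrange : ∀ ω, W ω ∈ Set.Icc (0:ℝ) 1)
    (h1 : ℙ {ω | W ω = 1} < 1) {q : ℝ} (hq : 0 ≤ q) : 0 < aMom ℙ W q := by
  rw [aMom, integral_pos_iff_support_of_nonneg
    (fun ω => Real.rpow_nonneg (by linarith [(hrange ω).2]) q)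
    (aMom_int ℙ W hWm hrange q hq)]
  have hsub : {ω | W ω = 1}ᶜ ⊆ Function.support fun ω => (1 - W ω) ^ q := by
    intro ω hω
    have : W ω < 1 := lt_of_le_of_ne (hrange ω).2 hω
    exact (Real.rpow_pos_of_pos (by linarith) q).ne'
  refine lt_of_lt_of_le ?_ (measure_mono hsub)
  have hms : MeasurableSet {ω | W ω = 1} := hWm (measurableSet_singleton 1)
  rw [prob_compl_eq_one_sub hms]
  exact tsub_pos_iff_lt.mpr h1

end basic
end aux

/-- for a `[0,1]`-valued `W` with `P(W=1) < 1`, the series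
`Σ_{n≥2} 1/(n(n-1)a_{n-2})` converges iff `∫_1^∞ dq/(q² a_q) < ∞`; consequently the death
process with rates `λ_n = (n/2)((n-1)a_{n-2} + θ)` satisfies `Σ λ_n⁻¹ < ∞` iff the same
integral condition holds. -/
theorem stmt17 {Ω : Type*} [MeasurableSpace Ω] (ℙ : Measure Ω) [IsProbabilityMeasure ℙ]
    (W : Ω → ℝ) (hWm : Measurable W) (hrange : ∀ ω, W ω ∈ Set.Icc (0:ℝ) 1)
    (h1 : ℙ {ω | W ω = 1} < 1) :
    ((∑' n : ℕ, ENNReal.ofReal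
        (1 / (((n : ℝ) + 2) * ((n : ℝ) + 1) * aMom ℙ W (n : ℝ)))) ≠ ⊤ ↔
      (∫⁻ q in Set.Ici (1:ℝ), ENNReal.ofReal (1 / (q ^ 2 * aMom ℙ W q))) ≠ ⊤) ∧
    ∀ θ : ℝ, 0 ≤ θ →
      ((∑' n : ℕ, ENNReal.ofReal
          (1 / ((((n : ℝ) + 2) / 2) * (((n : ℝ) + 1) * aMom ℙ W (n : ℝ) + θ)))) ≠ ⊤ ↔
        (∫⁻ q in Set.Ici (1:ℝ), ENNReal.ofReal (1 / (q ^ 2 * aMom ℙ W q))) ≠ ⊤) := by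
  have hApos : ∀ q : ℝ, 0 ≤ q → 0 < aMom ℙ W q := fun q hq => aMom_pos ℙ W hWm hrange h1 hq
  have hAanti : ∀ q r : ℝ, 0 ≤ q → q ≤ r → aMom ℙ W r ≤ aMom ℙ W q :=
    fun q r hq hqr => aMom_anti ℙ W hWm hrange hq hqr
  set A : ℝ → ℝ := fun q => aMom ℙ W q with hA
  set TT : ℕ → ℝ≥0∞ := fun n => ENNReal.ofReal (1 / (((n : ℝ) + 2) * ((n : ℝ) + 1) * A n))
    with hTT
  set F : ℝ → ℝ≥0∞ := fun q => ENNReal.ofReal (1 / (q ^ 2 * A q)) with hF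
  set S : ℝ≥0∞ := ∑' n, TT n with hS
  set I : ℝ≥0∞ := ∫⁻ q in Set.Ici (1:ℝ), F q with hI
  -- decomposition of the integral
  have hunion : Set.Ici (1:ℝ) = ⋃ n : ℕ, Set.Ico ((n:ℝ)+1) ((n:ℝ)+2) := by
    ext x
    simp only [mem_Ici, mem_iUnion, mem_Ico]
    constructor
    · intro hx
      refine ⟨⌊x - 1⌋₊, ?_, ?_⟩
      · have := Nat.floor_le (by linarith : (0:ℝ) ≤ x - 1); linarith
      · have := Nat.lt_floor_add_one (x - 1); linarith
    · rintro ⟨n, hn1, _⟩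
      have : (0:ℝ) ≤ n := n.cast_nonneg
      linarith
  have hdisj : Pairwise (Function.onFun Disjoint fun n : ℕ => Set.Ico ((n:ℝ)+1) ((n:ℝ)+2)) := by
    intro i j hij
    apply Set.disjoint_left.mpr
    intro x hxi hxj
    simp only [mem_Ico] at hxi hxj
    rcases lt_or_gt_of_ne hij with h | h
    · have : (i:ℝ) + 1 ≤ (j:ℝ) := by exact_mod_cast Nat.succ_le_of_lt h
      linarith [hxi.2, hxj.1]
    · have : (j:ℝ) + 1 ≤ (i:ℝ) := by exact_mod_cast Nat.succ_le_of_lt h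
      linarith [hxj.2, hxi.1]
  have hI_eq : I = ∑' n : ℕ, ∫⁻ q in Set.Ico ((n:ℝ)+1) ((n:ℝ)+2), F q := by
    rw [hI, hunion, lintegral_iUnion (fun n => measurableSet_Ico) hdisj]
  have hvol : ∀ n : ℕ, volume (Set.Ico ((n:ℝ)+1) ((n:ℝ)+2)) = 1 := by
    intro n
    rw [Real.volume_Ico]
    norm_num
  -- upper bound for the integral
  have hIc_up : ∀ n : ℕ, ∫⁻ q in Set.Ico ((n:ℝ)+1) ((n:ℝ)+2), F q
      ≤ ENNReal.ofReal 12 * TT (n + 2) := by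
    intro n
    have hA2 : 0 < A ((n:ℝ)+2) := hApos _ (by positivity)
    have h1' : ∫⁻ q in Set.Ico ((n:ℝ)+1) ((n:ℝ)+2), F q
        ≤ ENNReal.ofReal (1 / (((n:ℝ)+1)^2 * A ((n:ℝ)+2))) := by
      have := setLIntegral_le_of_forall volume (measurableSet_Ico
        (a := ((n:ℝ)+1)) (b := ((n:ℝ)+2))) F
        (ENNReal.ofReal (1 / (((n:ℝ)+1)^2 * A ((n:ℝ)+2)))) ?_
      · calc ∫⁻ q in Set.Ico ((n:ℝ)+1) ((n:ℝ)+2), F q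
            ≤ ENNReal.ofReal (1 / (((n:ℝ)+1)^2 * A ((n:ℝ)+2)))
              * volume (Set.Ico ((n:ℝ)+1) ((n:ℝ)+2)) := this
          _ = _ := by rw [hvol n, mul_one]
      · intro q hq
        simp only [mem_Ico] at hq
        have hq0 : (0:ℝ) < q := by
          have : (0:ℝ) ≤ n := n.cast_nonneg; linarith [hq.1]
        apply ENNReal.ofReal_le_ofReal
        apply one_div_le_one_div_of_le (by positivity)
        apply mul_le_mul
        · exact pow_le_pow_left₀ (by positivity) hq.1 2
        · exact hAanti q ((n:ℝ)+2) hq0.le hq.2.le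
        · exact hA2.le
        · positivity
    refine h1'.trans ?_
    rw [hTT, ← ENNReal.ofReal_mul (by norm_num : (0:ℝ) ≤ 12)]
    apply ENNReal.ofReal_le_ofReal
    push_cast
    rw [mul_one_div, div_le_div_iff₀ (by positivity) (by positivity)]
    have hn0 : (0:ℝ) ≤ n := n.cast_nonneg
    nlinarith [mul_nonneg (mul_nonneg hn0 hn0) hA2.le, mul_nonneg hn0 hA2.le]
  -- lower bound for the integral
  have hIc_lo : ∀ n : ℕ, TT (n + 1) ≤ ∫⁻ q in Set.Ico ((n:ℝ)+1) ((n:ℝ)+2), F q := by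
    intro n
    have hA1 : 0 < A ((n:ℝ)+1) := hApos _ (by positivity)
    have hpt : ∀ q ∈ Set.Ico ((n:ℝ)+1) ((n:ℝ)+2), TT (n+1) ≤ F q := by
      intro q hq
      simp only [mem_Ico] at hq
      have hq0 : (0:ℝ) < q := by
        have : (0:ℝ) ≤ n := n.cast_nonneg; linarith [hq.1]
      rw [hTT, hF]
      apply ENNReal.ofReal_le_ofReal
      have hApq : 0 < A q := hApos q hq0.le
      have hAq : A q ≤ A ((n:ℝ)+1) := hAanti ((n:ℝ)+1) q (by positivity) hq.1
      have hq2 : q^2 ≤ ((n:ℝ)+2)^2 := by nlinarith [hq.2, hq0]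
      apply one_div_le_one_div_of_le (_root_.mul_pos (by positivity) hApq)
      push_cast
      nlinarith [(n.cast_nonneg : (0:ℝ) ≤ n)]
    have hmain := le_setLIntegral_of_forall volume (measurableSet_Ico
      (a := ((n:ℝ)+1)) (b := ((n:ℝ)+2))) F (TT (n+1)) hpt
    calc TT (n+1) = TT (n+1) * volume (Set.Ico ((n:ℝ)+1) ((n:ℝ)+2)) := by
          rw [hvol n, mul_one]
      _ ≤ _ := hmain
  have hS_le : S ≤ TT 0 + I := by
    have hsplit : S = TT 0 + ∑' n, TT (n + 1) := tsum_eq_zero_add' ENNReal.summable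
    rw [hsplit, hI_eq]
    exact add_le_add_right (ENNReal.tsum_le_tsum hIc_lo) _
  have hI_le : I ≤ ENNReal.ofReal 12 * S := by
    rw [hI_eq]
    calc ∑' n : ℕ, ∫⁻ q in Set.Ico ((n:ℝ)+1) ((n:ℝ)+2), F q
        ≤ ∑' n : ℕ, ENNReal.ofReal 12 * TT (n + 2) := ENNReal.tsum_le_tsum hIc_up
      _ = ENNReal.ofReal 12 * ∑' n : ℕ, TT (n + 2) := ENNReal.tsum_mul_left
      _ ≤ ENNReal.ofReal 12 * S := by
          gcongr
          exact ENNReal.tsum_comp_le_tsum_of_injective (add_left_injective 2) TT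
  have part1 : S ≠ ⊤ ↔ I ≠ ⊤ := by
    constructor
    · intro hSne
      exact (lt_of_le_of_lt hI_le
        (ENNReal.mul_lt_top ENNReal.ofReal_lt_top (lt_top_iff_ne_top.mpr hSne))).ne
    · intro hIne
      exact (lt_of_le_of_lt hS_le
        (ENNReal.add_lt_top.mpr ⟨ENNReal.ofReal_lt_top, lt_top_iff_ne_top.mpr hIne⟩)).ne
  refine ⟨part1, ?_⟩
  intro θ hθ
  set L : ℕ → ℝ≥0∞ := fun n =>
    ENNReal.ofReal (1 / ((((n : ℝ) + 2) / 2) * (((n : ℝ) + 1) * A n + θ))) with hL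
  suffices h : (∑' n, L n) ≠ ⊤ ↔ S ≠ ⊤ by exact h.trans part1
  have hAn : ∀ n : ℕ, 0 < A n := fun n => hApos _ n.cast_nonneg
  have hL_le : ∀ n : ℕ, L n ≤ ENNReal.ofReal 2 * TT n := by
    intro n
    rw [hL, hTT, ← ENNReal.ofReal_mul (by norm_num : (0:ℝ) ≤ 2)]
    apply ENNReal.ofReal_le_ofReal
    have hn0 : (0:ℝ) ≤ n := n.cast_nonneg
    have hd1 : (0:ℝ) < (((n:ℝ)+2)/2) * (((n:ℝ)+1)*A n + θ) := by
      apply _root_.mul_pos (by positivity)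
      nlinarith [hAn n]
    have hd2 : (0:ℝ) < ((n:ℝ)+2)*((n:ℝ)+1)*A n :=
      _root_.mul_pos (by positivity) (hAn n)
    rw [mul_one_div, div_le_div_iff₀ hd1 hd2]
    nlinarith [mul_nonneg (mul_nonneg hn0 hn0) (hAn n).le, mul_nonneg hn0 (hAn n).le,
      mul_nonneg hn0 hθ]
  constructor
  · -- Σ L < ∞ → S < ∞ (contrapositive: S = ∞ → Σ L = ∞)
    intro hLne
    by_contra hStop
    rcases eq_or_lt_of_le hθ with hθ0 | hθpos
    · -- θ = 0 : L n = 2 * TT n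
      apply hLne
      have : ∀ n : ℕ, ENNReal.ofReal 2 * TT n = L n := by
        intro n
        rw [hL, hTT, ← ENNReal.ofReal_mul (by norm_num : (0:ℝ) ≤ 2), ← hθ0]
        congr 1
        have hne := (hAn n).ne'
        have hn2 : ((n:ℝ)+2) ≠ 0 := by positivity
        have hn1 : ((n:ℝ)+1) ≠ 0 := by positivity
        field_simp
        ring
      calc (∑' n, L n) = ∑' n, ENNReal.ofReal 2 * TT n := by
            exact tsum_congr fun n => (this n).symm
        _ = ENNReal.ofReal 2 * S := ENNReal.tsum_mul_left
        _ = ⊤ := by rw [hStop, ENNReal.mul_top (by simp)]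
    · by_cases hBfin : {n : ℕ | ((n:ℝ)+1) * A n < θ}.Finite
      · -- B finite: tail comparison L n ≥ TT n for large n
        obtain ⟨M, hM⟩ := hBfin.bddAbove
        apply hLne
        have htail : ∀ n : ℕ, M + 1 ≤ n → TT n ≤ L n := by
          intro n hn
          have hnB : ¬ (((n:ℝ)+1) * A n < θ) := by
            intro hmem
            exact absurd (hM hmem) (by omega)
          push_neg at hnB
          rw [hL, hTT]
          apply ENNReal.ofReal_le_ofReal
          have hn0 : (0:ℝ) ≤ n := n.cast_nonneg
          have hd1 : (0:ℝ) < (((n:ℝ)+2)/2) * (((n:ℝ)+1)*A n + θ) := by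
            apply _root_.mul_pos (by positivity)
            nlinarith [hAn n]
          apply one_div_le_one_div_of_le hd1
          nlinarith [mul_le_mul_of_nonneg_left hnB (by positivity : (0:ℝ) ≤ (n:ℝ)+2)]
        -- S = ⊤ gives tail of TT = ⊤, hence tail of L = ⊤, hence Σ L = ⊤
        have hTtail : (∑' n : ℕ, TT (n + (M+1))) = ⊤ := by
          have := Summable.sum_add_tsum_nat_add' (f := TT) (k := M+1) ENNReal.summable
          rw [← hS] at this
          rcases ENNReal.add_eq_top.mp (this.trans hStop) with h | h
          · exfalso
            exact (ENNReal.sum_lt_top.mpr fun i _ => ENNReal.ofReal_lt_top).ne h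
          · exact h
        have hLtail : (∑' n : ℕ, L (n + (M+1))) = ⊤ := by
          rw [eq_top_iff, ← hTtail]
          exact ENNReal.tsum_le_tsum fun n => htail (n + (M+1)) (by omega)
        have := Summable.sum_add_tsum_nat_add' (f := L) (k := M+1) ENNReal.summable
        rw [hLtail] at this
        rw [← this, ENNReal.add_eq_top]
        exact Or.inr rfl
      · -- B infinite: Σ L = ⊤ by the block lemma
        apply hLne
        have hBinf : {n : ℕ | ((n:ℝ)+1) * A n < θ}.Infinite := hBfin
        apply blocks_tsum_top L (ENNReal.ofReal (1/(3*θ)))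
          (ENNReal.ofReal_pos.mpr (by positivity))
        intro k
        obtain ⟨n, hnB, hkn⟩ := hBinf.exists_gt k
        simp only [Set.mem_setOf_eq] at hnB
        refine ⟨n, hkn.le, ?_⟩
        have hband : ∀ i ∈ Finset.Ico n (2*n+1),
            ENNReal.ofReal (1/(3*θ*((n:ℝ)+1))) ≤ L i := by
          intro i hi
          simp only [Finset.mem_Ico] at hi
          rw [hL]
          apply ENNReal.ofReal_le_ofReal
          have hin : ((i:ℝ)) ≤ 2*(n:ℝ) := by exact_mod_cast (by omega : i ≤ 2*n)
          have hni : ((n:ℝ)) ≤ i := by exact_mod_cast hi.1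
          have hAi : A i ≤ A n := hAanti _ _ n.cast_nonneg hni
          have hApi := hAn i
          have hApn := hAn n
          have hn0 : (0:ℝ) ≤ n := n.cast_nonneg
          have hi0 : (0:ℝ) ≤ i := i.cast_nonneg
          have hd1 : (0:ℝ) < (((i:ℝ)+2)/2) * (((i:ℝ)+1)*A i + θ) := by
            apply _root_.mul_pos (by positivity)
            nlinarith
          apply one_div_le_one_div_of_le hd1
          have h1 : ((i:ℝ)+1) * A i ≤ 2*θ := by
            have ha : ((i:ℝ)+1) * A i ≤ (2*(n:ℝ)+1) * A n :=
              mul_le_mul (by linarith) hAi hApi.le (by positivity)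
            nlinarith
          have h2 : ((i:ℝ)+2)/2 ≤ (n:ℝ)+1 := by linarith
          nlinarith
        have hcard : (Finset.Ico n (2*n+1)).card = n + 1 := by
          rw [Nat.card_Ico]; omega
        have hkey := Finset.card_nsmul_le_sum (Finset.Ico n (2*n+1)) L
          (ENNReal.ofReal (1/(3*θ*((n:ℝ)+1)))) hband
        rw [hcard] at hkey
        refine le_trans (le_of_eq ?_) hkey
        rw [nsmul_eq_mul]
        rw [show ((n+1 : ℕ) : ℝ≥0∞) = ENNReal.ofReal ((n:ℝ)+1) by
          rw [← ENNReal.ofReal_natCast (n+1)]; push_cast; ring_nf]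
        rw [← ENNReal.ofReal_mul (by positivity)]
        congr 1
        have hθne : θ ≠ 0 := hθpos.ne'
        have hn1 : ((n:ℝ)+1) ≠ 0 := by positivity
        field_simp
  · -- S < ∞ → Σ L < ∞
    intro hSne
    have : (∑' n, L n) ≤ ENNReal.ofReal 2 * S :=
      (ENNReal.tsum_le_tsum hL_le).trans_eq ENNReal.tsum_mul_left
    exact (lt_of_le_of_lt this
      (ENNReal.mul_lt_top ENNReal.ofReal_lt_top (lt_top_iff_ne_top.mpr hSne))).ne
end

section
/- Let θ > 0, let (w_j)_{j≥2} be positive real numbers, let k ≥ 1 and n₁,…,n_k ≥ 1 be integers with n = n₁ + ⋯ + n_k, and set D = ∏_{j=1}^n ( (j−1) w_j + θ ) where the j = 1 factor is θ (with w_1 arbitrary). Then lim_{d→∞} d(d−1)⋯(d−k+1) · ( n! / (n₁! ⋯ n_k!) ) · ∏_{i=1}^k [ (θ/d) ∏_{j=2}^{n_i} ( (j−1) w_j + θ/d ) ] / D = ( n! θ^k / (n₁ ⋯ n_k) ) · ∏_{i=1}^k ∏_{j=2}^{n_i} w_j / D. (With w_j = E[(1−W)^{j−2}] this is the Λ-Fleming-Viot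 analogue of the Ewens sampling formula obtained by letting θ_i = θ/d and d → ∞; taking w_j ≡ 1 recovers the Ewens sampling formula.) -/
open Finset Filter

lemma prod_Icc_sub_one (m : ℕ) :
    ∏ j ∈ Finset.Icc 2 m, ((j : ℝ) - 1) = Nat.factorial (m - 1) := by
  induction m with
  | zero => simp
  | succ m ih =>
    rcases Nat.lt_or_ge m 1 with hm | hm
    · interval_cases m <;> simp
    · rw [Finset.prod_Icc_succ_top (by omega), ih, Nat.add_sub_cancel]
      conv_rhs => rw [← Nat.succ_pred_eq_of_pos (by omega : 0 < m), Nat.factorial_succ]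
      simp only [Nat.pred_eq_sub_one]
      push_cast [Nat.cast_sub hm]
      ring

/-- the Λ-Fleming-Viot analogue of the Ewens sampling formula, obtained as
the limit `d → ∞` with `θ_i = θ/d` of `d_{[k]} (n choose n₁,…,n_k) E[g_n(X)]`.  With
`w_j = E[(1-W)^{j-2}]` this is the sampling formula of the paper; `w_j ≡ 1` recovers the
Ewens sampling formula. -/
theorem stmt19 (θ : ℝ) (hθ : 0 < θ) (w : ℕ → ℝ) (hw : ∀ j, 2 ≤ j → 0 < w j)
    (k : ℕ) (hk : 1 ≤ k) (nv : Fin k → ℕ) (hnv : ∀ i, 1 ≤ nv i) :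
    Tendsto (fun d : ℕ =>
        (∏ i ∈ Finset.range k, ((d : ℝ) - (i : ℝ))) *
        ((Nat.factorial (∑ i, nv i) : ℝ) / ∏ i, (Nat.factorial (nv i) : ℝ)) *
        (∏ i, ((θ / (d : ℝ)) *
          ∏ j ∈ Finset.Icc 2 (nv i), (((j : ℝ) - 1) * w j + θ / (d : ℝ)))) /
        (∏ j ∈ Finset.Icc 1 (∑ i, nv i), (((j : ℝ) - 1) * w j + θ)))
      atTop
      (nhds ((Nat.factorial (∑ i, nv i) : ℝ) * θ ^ k / (∏ i, (nv i : ℝ)) *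
        (∏ i, ∏ j ∈ Finset.Icc 2 (nv i), w j) /
        (∏ j ∈ Finset.Icc 1 (∑ i, nv i), (((j : ℝ) - 1) * w j + θ)))) := by
  set n := ∑ i, nv i with hn
  set D := ∏ j ∈ Finset.Icc 1 n, (((j : ℝ) - 1) * w j + θ) with hD
  set C := (Nat.factorial n : ℝ) / ∏ i, (Nat.factorial (nv i) : ℝ) with hC
  set h : ℝ → ℝ := fun x =>
    (∏ i ∈ Finset.range k, (1 - (i : ℝ) * x)) * θ ^ k * C *
      (∏ i, ∏ j ∈ Finset.Icc 2 (nv i), (((j : ℝ) - 1) * w j + θ * x)) / D with hh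
  have hcont : Continuous h := by
    apply Continuous.div_const
    fun_prop
  have hlim : Tendsto (fun d : ℕ => h (1 / (d : ℝ))) atTop (nhds (h 0)) :=
    hcont.continuousAt.tendsto.comp tendsto_one_div_atTop_nhds_zero_nat
  have h1 : ∀ i : Fin k, (0:ℝ) < nv i := fun i => by exact_mod_cast hnv i
  have h2 : (0:ℝ) < ∏ i, (nv i : ℝ) := Finset.prod_pos (fun i _ => h1 i)
  have h3 : (0:ℝ) < ∏ i, (Nat.factorial (nv i - 1) : ℝ) :=
    Finset.prod_pos (fun i _ => by positivity)
  have hfac : ∀ i : Fin k, (Nat.factorial (nv i) : ℝ) =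
      (nv i : ℝ) * Nat.factorial (nv i - 1) := by
    intro i
    have h := hnv i
    have he : nv i = (nv i - 1) + 1 := by omega
    rw [he, Nat.factorial_succ]
    push_cast
    ring
  have hCf : C * ∏ i, (Nat.factorial (nv i - 1) : ℝ) =
      (Nat.factorial n : ℝ) / ∏ i, (nv i : ℝ) := by
    rw [hC, Finset.prod_congr rfl (fun i _ => hfac i), Finset.prod_mul_distrib]
    field_simp
  have h0 : h 0 = (Nat.factorial n : ℝ) * θ ^ k / (∏ i, (nv i : ℝ)) *
      (∏ i, ∏ j ∈ Finset.Icc 2 (nv i), w j) / D := by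
    simp only [hh, mul_zero, add_zero, sub_zero, Finset.prod_const_one, one_mul]
    congr 1
    have key : ∀ i : Fin k, ∏ j ∈ Finset.Icc 2 (nv i), (((j : ℝ) - 1) * w j) =
        (Nat.factorial (nv i - 1) : ℝ) * ∏ j ∈ Finset.Icc 2 (nv i), w j := by
      intro i
      rw [Finset.prod_mul_distrib, prod_Icc_sub_one]
    rw [Finset.prod_congr rfl (fun i _ => key i), Finset.prod_mul_distrib]
    linear_combination (θ ^ k * ∏ i, ∏ j ∈ Finset.Icc 2 (nv i), w j) * hCf
  rw [← h0]
  apply hlim.congr'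
  filter_upwards [eventually_ge_atTop 1] with d hd
  have hd0 : (d : ℝ) ≠ 0 := by
    have : (0:ℝ) < d := by exact_mod_cast hd
    linarith
  simp only [hh, mul_one_div]
  congr 1
  rw [Finset.prod_mul_distrib, Finset.prod_const, Finset.card_univ, Fintype.card_fin]
  have hP : ∏ i ∈ Finset.range k, (1 - (i : ℝ) / (d : ℝ)) =
      (∏ i ∈ Finset.range k, ((d : ℝ) - (i : ℝ))) / (d : ℝ) ^ k := by
    have he : ∀ i ∈ Finset.range k, (1 - (i : ℝ) / (d : ℝ)) = ((d : ℝ) - (i : ℝ)) / (d : ℝ) :=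
      fun i _ => by field_simp
    rw [Finset.prod_congr rfl he, Finset.prod_div_distrib, Finset.prod_const,
      Finset.card_range]
  rw [hP, div_pow]
  field_simp
end
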